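/- Under the one-step partial replacement design, P(k ∈ s' | k ∉ s) = f' - f·λ, where f = n/N, f' = n'/N, λ = (1 - α - f')/(1 - f) and α = a/n. -/

import Mathlib

open Finset

lemma card_filter_triple {α β γ : Type*} [Fintype α] [Fintype β] [Fintype γ]
    (P : α → Prop) (Q : α → β → Prop) (R : α → γ → Prop)
    [DecidablePred P] [∀ s, DecidablePred (Q s)] [∀ s, DecidablePred (R s)] :
    (univ.filter (fun p : α × β × γ => P p.1 ∧ Q p.1 p.2.1 ∧ R p.1 p.2.2)).card
    = ∑ s ∈ univ.filter P, (univ.filter (Q s)).card * (univ.filter (R s)).card := by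
  classical
  rw [Finset.card_filter, Fintype.sum_prod_type]
  have h1 : ∀ s : α, (∑ q : β × γ, if P s ∧ Q s q.1 ∧ R s q.2 then 1 else 0)
      = if P s then (univ.filter (Q s)).card * (univ.filter (R s)).card else 0 := by
    intro s
    by_cases hP : P s
    · simp only [hP, true_and, if_true]
      rw [Fintype.sum_prod_type, Finset.card_filter, Finset.card_filter, Finset.sum_mul_sum]
      apply Finset.sum_congr rfl
      intro D _
      apply Finset.sum_congr rfl
      intro A _
      by_cases hQ : Q s D <;> by_cases hR : R s A <;> simp [hQ, hR]
    · simp [hP]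
  simp only [h1]
  rw [← Finset.sum_filter]

lemma card_filter_mem_subset {α : Type*} [Fintype α] [DecidableEq α]
    (c : Finset α) (k : α) (hk : k ∈ c) (m : ℕ) (hm : 1 ≤ m) :
    (univ.filter (fun A : Finset α => A ⊆ c ∧ A.card = m ∧ k ∈ A)).card
      = (c.card - 1).choose (m - 1) := by
  rw [show c.card - 1 = (c.erase k).card from (Finset.card_erase_of_mem hk).symm, ← Finset.card_powersetCard]
  apply Finset.card_bij' (fun A _ => A.erase k) (fun B _ => insert k B)
  · intro A hA
    simp only [mem_filter, mem_univ, true_and] at hA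
    exact Finset.insert_erase hA.2.2
  · intro B hB
    rw [Finset.mem_powersetCard] at hB
    exact Finset.erase_insert (fun h => (Finset.mem_erase.mp (hB.1 h)).1 rfl)
  · intro A hA
    simp only [mem_filter, mem_univ, true_and] at hA
    rw [Finset.mem_powersetCard]
    exact ⟨Finset.erase_subset_erase k hA.1, by rw [Finset.card_erase_of_mem hA.2.2, hA.2.1]⟩
  · intro B hB
    rw [Finset.mem_powersetCard] at hB
    have hkB : k ∉ B := fun h => (Finset.mem_erase.mp (hB.1 h)).1 rfl
    simp only [mem_filter, mem_univ, true_and]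
    refine ⟨Finset.insert_subset hk (hB.1.trans (Finset.erase_subset _ _)), ?_, Finset.mem_insert_self _ _⟩
    rw [Finset.card_insert_of_notMem hkB, hB.2]
    omega

theorem partial_replacement_cond_out (N a n n' : ℕ) (ha : a ≤ n) (hn1 : 1 ≤ n)
    (hn : n < N) (hlow : n - a ≤ n') (hhigh : n' ≤ N - a) (k : Fin N)
    (T : Finset (Finset (Fin N) × Finset (Fin N) × Finset (Fin N)))
    (hT : T = Finset.univ.filter (fun p =>
      p.1.card = n ∧ p.2.1 ⊆ p.1 ∧ p.2.1.card = a ∧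
        p.2.2 ⊆ p.1ᶜ ∧ p.2.2.card = n' - (n - a))) :
    (((T.filter (fun p => k ∉ p.1 ∧ k ∈ (p.1 \ p.2.1) ∪ p.2.2)).card : ℝ) /
        ((T.filter (fun p => k ∉ p.1)).card : ℝ)) =
      (n' : ℝ) / N -
        ((n : ℝ) / N) * ((1 - (a : ℝ) / n - (n' : ℝ) / N) / (1 - (n : ℝ) / N)) := by
  classical
  set m : ℕ := n' - (n - a) with hmdef
  -- basic arithmetic facts
  have hmN : m ≤ N - n := by omega
  have hNpos : 0 < N := by omega
  have hNR : (0:ℝ) < N := by exact_mod_cast hNpos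
  have hnR : (0:ℝ) < n := by exact_mod_cast hn1
  have hNnR : (0:ℝ) < (N:ℝ) - n := by
    have : (n:ℝ) < N := by exact_mod_cast hn
    linarith
  have hmcast : (m:ℝ) = (n':ℝ) + a - n := by
    have h : m + n = n' + a := by omega
    have := congrArg (fun x : ℕ => (x:ℝ)) h
    push_cast at this
    linarith
  -- reduce RHS to m / (N - n)
  have hR : (n' : ℝ) / N -
        ((n : ℝ) / N) * ((1 - (a : ℝ) / n - (n' : ℝ) / N) / (1 - (n : ℝ) / N))
      = (m:ℝ) / ((N:ℝ) - n) := by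
    have h1 : (1:ℝ) - (n:ℝ)/N ≠ 0 := by
      have : (1:ℝ) - (n:ℝ)/N = ((N:ℝ) - n)/N := by field_simp
      rw [this]
      positivity
    rw [hmcast]
    field_simp
    ring
  rw [hR]
  -- predicates
  set P : Finset (Fin N) → Prop := fun s => s.card = n ∧ k ∉ s with hP
  set Q : Finset (Fin N) → Finset (Fin N) → Prop := fun s D => D ⊆ s ∧ D.card = a with hQ
  set R1 : Finset (Fin N) → Finset (Fin N) → Prop := fun s A => A ⊆ sᶜ ∧ A.card = m with hR1
  set R2 : Finset (Fin N) → Finset (Fin N) → Prop :=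
    fun s A => A ⊆ sᶜ ∧ A.card = m ∧ k ∈ A with hR2
  -- denominator
  have hden : (T.filter (fun p => k ∉ p.1)).card
      = ∑ s ∈ univ.filter P, (univ.filter (Q s)).card * (univ.filter (R1 s)).card := by
    rw [hT, Finset.filter_filter, ← card_filter_triple P Q R1]
    congr 1
    apply Finset.filter_congr
    intro p _
    simp only [hP, hQ, hR1]
    tauto
  -- numerator
  have hnum : (T.filter (fun p => k ∉ p.1 ∧ k ∈ (p.1 \ p.2.1) ∪ p.2.2)).card
      = ∑ s ∈ univ.filter P, (univ.filter (Q s)).card * (univ.filter (R2 s)).card := by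
    rw [hT, Finset.filter_filter, ← card_filter_triple P Q R2]
    congr 1
    apply Finset.filter_congr
    intro p _
    simp only [hP, hQ, hR2, Finset.mem_union, Finset.mem_sdiff]
    constructor
    · rintro ⟨⟨h1, h2, h3, h4, h5⟩, h6, h7⟩
      refine ⟨⟨h1, h6⟩, ⟨h2, h3⟩, h4, h5, ?_⟩
      rcases h7 with ⟨hk1, _⟩ | hk2
      · exact absurd hk1 h6
      · exact hk2
    · rintro ⟨⟨h1, h6⟩, ⟨h2, h3⟩, h4, h5, h7⟩
      exact ⟨⟨h1, h2, h3, h4, h5⟩, h6, Or.inr h7⟩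
  -- per-s counts
  have hQc : ∀ s ∈ univ.filter P, (univ.filter (Q s)).card = n.choose a := by
    intro s hs
    simp only [mem_filter, hP] at hs
    have : univ.filter (Q s) = s.powersetCard a := by
      ext D
      simp [hQ, Finset.mem_powersetCard]
    rw [this, Finset.card_powersetCard, hs.2.1]
  have hscompl : ∀ s : Finset (Fin N), s.card = n → (sᶜ : Finset (Fin N)).card = N - n := by
    intro s hs
    rw [Finset.card_compl, hs, Fintype.card_fin]
  have hR1c : ∀ s ∈ univ.filter P, (univ.filter (R1 s)).card = (N - n).choose m := by
    intro s hs
    simp only [mem_filter, hP] at hs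
    have : univ.filter (R1 s) = (sᶜ).powersetCard m := by
      ext A
      simp [hR1, Finset.mem_powersetCard]
    rw [this, Finset.card_powersetCard, hscompl s hs.2.1]
  -- nonemptiness of the s-index set
  have hSpos : 0 < (univ.filter P).card := by
    obtain ⟨t, hts, htc⟩ := Finset.exists_subset_card_eq (s := ({k}ᶜ : Finset (Fin N))) (n := n)
      (by rw [Finset.card_compl, Fintype.card_fin, Finset.card_singleton]; omega)
    apply Finset.card_pos.mpr
    refine ⟨t, ?_⟩
    simp only [mem_filter, mem_univ, true_and, hP]
    refine ⟨htc, fun hk => ?_⟩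
    have := hts hk
    simp at this
  have hden' : ((T.filter (fun p => k ∉ p.1)).card : ℕ)
      = (univ.filter P).card * (n.choose a * (N - n).choose m) := by
    rw [hden, Finset.sum_congr rfl (fun s hs => by rw [hQc s hs, hR1c s hs]),
      Finset.sum_const, smul_eq_mul]
  have hdenpos : 0 < (T.filter (fun p => k ∉ p.1)).card := by
    rw [hden']
    exact Nat.mul_pos hSpos (Nat.mul_pos (Nat.choose_pos ha) (Nat.choose_pos hmN))
  rcases Nat.eq_zero_or_pos m with hm0 | hm1
  · -- m = 0 : numerator is 0 and RHS is 0
    have hnum0 : (T.filter (fun p => k ∉ p.1 ∧ k ∈ (p.1 \ p.2.1) ∪ p.2.2)).card = 0 := by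
      rw [hnum]
      apply Finset.sum_eq_zero
      intro s _
      have : univ.filter (R2 s) = ∅ := by
        apply Finset.filter_eq_empty_iff.mpr
        intro A _
        simp only [hR2]
        rintro ⟨_, hc, hk⟩
        rw [hm0] at hc
        rw [Finset.card_eq_zero] at hc
        subst hc
        simp at hk
      rw [this]
      simp
    rw [hnum0, hm0]
    simp
  · -- m ≥ 1
    have hR2c : ∀ s ∈ univ.filter P, (univ.filter (R2 s)).card = (N - n - 1).choose (m - 1) := by
      intro s hs
      simp only [mem_filter, hP] at hs
      have hkc : k ∈ (sᶜ : Finset (Fin N)) := by simp [hs.2.2]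
      have := card_filter_mem_subset (sᶜ : Finset (Fin N)) k hkc m hm1
      rw [hscompl s hs.2.1] at this
      rw [← this]
    have hnum' : ((T.filter (fun p => k ∉ p.1 ∧ k ∈ (p.1 \ p.2.1) ∪ p.2.2)).card : ℕ)
        = (univ.filter P).card * (n.choose a * (N - n - 1).choose (m - 1)) := by
      rw [hnum, Finset.sum_congr rfl (fun s hs => by rw [hQc s hs, hR2c s hs]),
        Finset.sum_const, smul_eq_mul]
    -- key combinatorial identity
    have hkey : (N - n - 1).choose (m - 1) * (N - n) = (N - n).choose m * m := by
      have h1 : N - n = (N - n - 1) + 1 := by omega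
      have h2 : m = (m - 1) + 1 := by omega
      calc (N - n - 1).choose (m - 1) * (N - n)
          = ((N - n - 1) + 1) * (N - n - 1).choose (m - 1) := by rw [← h1]; ring
        _ = ((N - n - 1) + 1).choose ((m - 1) + 1) * ((m - 1) + 1) := Nat.add_one_mul_choose_eq _ _
        _ = (N - n).choose m * m := by rw [← h1, ← h2]
    rw [hnum', hden']
    have hdR : (0:ℝ) < ((univ.filter P).card * (n.choose a * (N - n).choose m) : ℕ) := by
      exact_mod_cast Nat.mul_pos hSpos (Nat.mul_pos (Nat.choose_pos ha) (Nat.choose_pos hmN))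
    rw [div_eq_div_iff (ne_of_gt hdR) (ne_of_gt hNnR)]
    have hNn' : ((N - n : ℕ) : ℝ) = (N:ℝ) - n := by
      push_cast [Nat.cast_sub hn.le]
      ring
    rw [← hNn']
    push_cast
    have hkeyR : ((N - n - 1).choose (m - 1) : ℝ) * ((N - n : ℕ) : ℝ)
        = ((N - n).choose m : ℝ) * m := by exact_mod_cast congrArg (fun x : ℕ => (x:ℝ)) hkey
    linear_combination (((univ.filter P).card : ℝ) * ((n.choose a : ℕ) : ℝ)) * hkeyR
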